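/- (Lemma 2: history-independence of modal context trees.) Let M be the model of an interpreted system with regular labelling and φ an EHS⁺_{AB̄N} formula (an EHS⁺ formula whose modalities are all among K_i, C_Γ, ⟨A⟩, ⟨B̄⟩, ⟨N⟩). If I and I' are intervals of M with g(I) = g(I'), then MCT_I^φ = MCT_{I'}^φ. -/

import Mathlib

/-- The Halpern-Shoham interval modalities. -/
inductive HSMod : Type where
  | A | Abar | B | Bbar | D | Dbar | E | Ebar | L | Lbar | N | Nbar | O | Obar
  deriving DecidableEq

/-- Formulas of the logic EHS⁺ over agents `0,…,m` and propositional variables `V`. -/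
inductive EHSFormula (m : ℕ) (V : Type) : Type where
  | pt : EHSFormula m V
  | prop : V → EHSFormula m V
  | neg : EHSFormula m V → EHSFormula m V
  | conj : EHSFormula m V → EHSFormula m V → EHSFormula m V
  | know : Fin (m + 1) → EHSFormula m V → EHSFormula m V
  | common : Finset (Fin (m + 1)) → EHSFormula m V → EHSFormula m V
  | dia : HSMod → EHSFormula m V → EHSFormula m V
  deriving DecidableEq

/-- An interpreted system with regular labelling over agents `0,…,m` (agent `0` is the
environment) and variables `Var`. -/
structure ISRL (m : ℕ) (Var : Type) where
  L : Fin (m + 1) → Type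
  finL : ∀ i, Fintype (L i)
  l0 : ∀ i, L i
  ACT : Fin (m + 1) → Type
  finACT : ∀ i, Fintype (ACT i)
  P : ∀ i, L i → Set (ACT i)
  T : ∀ i, L i → (∀ j, ACT j) → L i → Prop
  lab : Var → RegularExpression (∀ i, L i)

attribute [instance] ISRL.finL ISRL.finACT

namespace ISRL

variable {m : ℕ} {Var : Type}

/-- Global configurations. -/
abbrev G (IS : ISRL m Var) : Type := ∀ i, IS.L i

instance (IS : ISRL m Var) : Fintype IS.G := Pi.instFintype

/-- The initial global configuration. -/
def g0 (IS : ISRL m Var) : IS.G := IS.l0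

/-- The global transition relation `t^G`. -/
def tG (IS : ISRL m Var) (g g' : IS.G) : Prop :=
  ∃ a : ∀ j, IS.ACT j, ∀ i, a i ∈ IS.P i (g i) ∧ IS.T i (g i) a (g' i)

/-- A partial state: a nonempty `t^G`-chain of configurations. -/
def IsPState (IS : ISRL m Var) (w : List IS.G) : Prop :=
  w ≠ [] ∧ w.Chain' IS.tG

/-- A global state of the model: a partial state starting at the initial configuration. -/
def IsState (IS : ISRL m Var) (w : List IS.G) : Prop :=
  IS.IsPState w ∧ w.head? = some IS.g0

/-- `g(s)`: the actual configuration of a (partial) state, i.e. its last configuration. -/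
def gOf (IS : ISRL m Var) (w : List IS.G) : IS.G := w.getLastD IS.g0

/-- The global transition relation `t` of the model: extension by exactly one configuration. -/
def step (IS : ISRL m Var) (w w' : List IS.G) : Prop := ∃ g : IS.G, w' = w ++ [g]

/-- Epistemic indistinguishability of states for agent `i`. -/
def simS (IS : ISRL m Var) (i : Fin (m + 1)) (w w' : List IS.G) : Prop :=
  IS.gOf w i = IS.gOf w' i

/-- An interval of the model: a nonempty `t`-path of global states. -/
def IsInterval (IS : ISRL m Var) (l : List (List IS.G)) : Prop :=
  l ≠ [] ∧ (∀ w ∈ l, IS.IsState w) ∧ l.Chain' IS.step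

/-- Intervals of the model of `IS`. -/
structure Interval (IS : ISRL m Var) : Type where
  seq : List (List IS.G)
  isInterval : IS.IsInterval seq

namespace Interval

variable {IS : ISRL m Var}

/-- `first(I)`. -/
def first (I : Interval IS) : List IS.G := I.seq.headD []

/-- `last(I)`. -/
def last (I : Interval IS) : List IS.G := I.seq.getLastD []

/-- `I` is a point interval. -/
def isPt (I : Interval IS) : Prop := I.seq.length = 1

/-- `g(I)`, the word of configurations read along `I`. -/
def gword (I : Interval IS) : List IS.G := I.seq.map IS.gOf

end Interval

section rels

variable {IS : ISRL m Var}

def relA (I I' : Interval IS) : Prop := I'.first = I.last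
def relB (I I' : Interval IS) : Prop :=
  ∃ J : List (List IS.G), J ≠ [] ∧ I.seq = I'.seq ++ J
def relD (I I' : Interval IS) : Prop :=
  ∃ J K : List (List IS.G), J ≠ [] ∧ K ≠ [] ∧ I.seq = J ++ I'.seq ++ K
def relE (I I' : Interval IS) : Prop :=
  ∃ J : List (List IS.G), J ≠ [] ∧ I.seq = J ++ I'.seq
def relL (I I' : Interval IS) : Prop := Relation.TransGen IS.step I.last I'.first
def relN (I I' : Interval IS) : Prop := IS.step I.last I'.first
def relO (I I' : Interval IS) : Prop :=
  ∃ J K : List (List IS.G), J ≠ [] ∧ K ≠ [] ∧ I.seq ++ J = K ++ I'.seq ∧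
    IS.IsInterval (I.seq ++ J)

end rels

/-- The Allen relations on intervals of the model of `IS`. -/
def hsRel (IS : ISRL m Var) : HSMod → Interval IS → Interval IS → Prop
  | .A => fun I I' => relA I I'
  | .Abar => fun I I' => relA I' I
  | .B => fun I I' => relB I I'
  | .Bbar => fun I I' => relB I' I
  | .D => fun I I' => relD I I'
  | .Dbar => fun I I' => relD I' I
  | .E => fun I I' => relE I I'
  | .Ebar => fun I I' => relE I' I
  | .L => fun I I' => relL I I'
  | .Lbar => fun I I' => relL I' I
  | .N => fun I I' => relN I I'
  | .Nbar => fun I I' => relN I' I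
  | .O => fun I I' => relO I I'
  | .Obar => fun I I' => relO I' I

/-- Epistemic indistinguishability of intervals for agent `i`. -/
def simI (IS : ISRL m Var) (i : Fin (m + 1)) (I I' : Interval IS) : Prop :=
  List.Forall₂ (IS.simS i) I.seq I'.seq

/-- `∼_Γ`: the transitive closure of the union of the `∼_i`, `i ∈ Γ`. -/
def simC (IS : ISRL m Var) (Γ : Finset (Fin (m + 1))) : Interval IS → Interval IS → Prop :=
  Relation.TransGen (fun I I' => ∃ i ∈ Γ, IS.simI i I I')

/-- Satisfaction of EHS⁺ formulas at an interval, with respect to a labelling `lab`. -/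
def Sat (IS : ISRL m Var) {W : Type} (lab : W → RegularExpression IS.G) :
    EHSFormula m W → Interval IS → Prop
  | .pt, I => I.isPt
  | .prop p, I => I.gword ∈ (lab p).matches'
  | .neg φ, I => ¬ Sat IS lab φ I
  | .conj φ ψ, I => Sat IS lab φ I ∧ Sat IS lab ψ I
  | .know i φ, I => ∀ I', IS.simI i I' I → Sat IS lab φ I'
  | .common Γ φ, I => ∀ I', IS.simC Γ I' I → Sat IS lab φ I'
  | .dia X φ, I => ∃ I', IS.hsRel X I I' ∧ Sat IS lab φ I'

end ISRL

/-- The `AB̄N` fragment of EHS⁺: all modalities are among `K_i`, `C_Γ`, `⟨A⟩`, `⟨B̄⟩`, `⟨N⟩`. -/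
def IsABN {m : ℕ} {V : Type} : EHSFormula m V → Prop
  | .pt => True
  | .prop _ => True
  | .neg φ => IsABN φ
  | .conj φ ψ => IsABN φ ∧ IsABN ψ
  | .know _ φ => IsABN φ
  | .common _ φ => IsABN φ
  | .dia X φ => (X = HSMod.A ∨ X = HSMod.Bbar ∨ X = HSMod.N) ∧ IsABN φ

/-- A size function on formulas (used as a termination measure). -/
def fsize {m : ℕ} {V : Type} : EHSFormula m V → ℕ
  | .pt => 1
  | .prop _ => 1
  | .neg φ => fsize φ + 1
  | .conj φ ψ => fsize φ + fsize ψ + 1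
  | .know _ φ => fsize φ + 1
  | .common _ φ => fsize φ + 1
  | .dia _ φ => fsize φ + 1

/-- The set of top-level subformulas of a formula: modal subformulas not in the scope of
any modality. -/
def TL {m : ℕ} {V : Type} [DecidableEq V] : EHSFormula m V → Finset (EHSFormula m V)
  | .pt => ∅
  | .prop _ => ∅
  | .neg φ => TL φ
  | .conj φ ψ => TL φ ∪ TL ψ
  | .know i φ => {EHSFormula.know i φ}
  | .common Γ φ => {EHSFormula.common Γ φ}
  | .dia X φ => {EHSFormula.dia X φ}

/-- The body of a (modal) formula. -/
def body {m : ℕ} {V : Type} : EHSFormula m V → EHSFormula m V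
  | .pt => .pt
  | .prop p => .prop p
  | .neg φ => .neg φ
  | .conj φ ψ => .conj φ ψ
  | .know _ φ => φ
  | .common _ φ => φ
  | .dia _ φ => φ

theorem fsize_body_lt {m : ℕ} {V : Type} [DecidableEq V] (φ : EHSFormula m V) :
    ∀ χ ∈ TL φ, fsize (body χ) < fsize φ := by
  induction φ with
  | pt => simp [TL]
  | prop p => simp [TL]
  | neg φ ih =>
      intro χ hχ
      have := ih χ hχ
      simp only [fsize]
      omega
  | conj φ ψ ih1 ih2 =>
      intro χ hχ
      simp only [TL, Finset.mem_union] at hχ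
      rcases hχ with h | h
      · have := ih1 χ h; simp only [fsize]; omega
      · have := ih2 χ h; simp only [fsize]; omega
  | know i φ ih =>
      intro χ hχ
      simp only [TL, Finset.mem_singleton] at hχ
      subst hχ
      simp only [body, fsize]
      omega
  | common Γ φ ih =>
      intro χ hχ
      simp only [TL, Finset.mem_singleton] at hχ
      subst hχ
      simp only [body, fsize]
      omega
  | dia X φ ih =>
      intro χ hχ
      simp only [TL, Finset.mem_singleton] at hχ
      subst hχ
      simp only [body, fsize]
      omega

/-- The function `f(φ) = base · ∏_{Xψ top-level subformula of φ} 2^{f(ψ)}`, where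
`base = 2·|G|²·∏_{p ∈ Var} |Q_p|` is supplied as a parameter. -/
def fval {m : ℕ} {V : Type} [DecidableEq V] (base : ℕ) (φ : EHSFormula m V) : ℕ :=
  base * ∏ χ ∈ (TL φ).attach, 2 ^ fval base (body χ.1)
termination_by fsize φ
decreasing_by exact fsize_body_lt φ χ.1 χ.2

namespace ISRL

variable {m : ℕ} {Var : Type}

/-- The relation on intervals associated with a top-level (modal) subformula:
`R_{K_i} = ∼_i`, `R_{C_Γ} = ∼_Γ`, and `R_{⟨X⟩} = R_X`. -/
def modRel (IS : ISRL m Var) {W : Type} : EHSFormula m W → Interval IS → Interval IS → Prop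
  | .know i _ => IS.simI i
  | .common Γ _ => IS.simC Γ
  | .dia X _ => IS.hsRel X
  | _ => fun _ _ => False

/-- Equality of the modal context trees `MCT_I^φ = MCT_{I'}^φ`, expressed recursively:
the root labels `(g(first(I)), g(last(I)), pi(I), 𝒜_{g(I)})` coincide, and for every
top-level subformula `Xψ` of `φ` the sets of subtrees `{MCT_J^ψ : I R_X J}` and
`{MCT_{J'}^ψ : I' R_X J'}` coincide. -/
def MCTEq (IS : ISRL m Var) [DecidableEq Var] (Q : Var → Type) (dfa : ∀ p, DFA IS.G (Q p))
    (φ : EHSFormula m Var) (I I' : Interval IS) : Prop :=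
  IS.gOf I.first = IS.gOf I'.first ∧
  IS.gOf I.last = IS.gOf I'.last ∧
  (I.isPt ↔ I'.isPt) ∧
  (∀ p, (dfa p).eval I.gword = (dfa p).eval I'.gword) ∧
  (∀ χ ∈ TL φ,
    (∀ J, IS.modRel χ I J → ∃ J', IS.modRel χ I' J' ∧ MCTEq IS Q dfa (body χ) J J') ∧
    (∀ J', IS.modRel χ I' J' → ∃ J, IS.modRel χ I J ∧ MCTEq IS Q dfa (body χ) J J'))
termination_by fsize φ
decreasing_by all_goals exact fsize_body_lt φ _ (by assumption)

end ISRL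


section Lemma2Aux

namespace ISRL

variable {m : ℕ} {Var : Type} {IS : ISRL m Var}

lemma gOf_append {w r : List IS.G} (hr : r ≠ []) : IS.gOf (w ++ r) = IS.gOf r := by
  simp [ISRL.gOf, List.getLastD_eq_getLast?, List.getLast?_append_of_ne_nil (l₁ := w) hr]

lemma gOf_eq_getLast {w : List IS.G} (hw : w ≠ []) : IS.gOf w = w.getLast hw := by
  simp [ISRL.gOf, List.getLastD_eq_getLast?, List.getLast?_eq_getLast hw]

lemma getLast?_state {s : List IS.G} (hs : s ≠ []) : s.getLast? = some (IS.gOf s) := by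
  rw [List.getLast?_eq_getLast hs, gOf_eq_getLast hs]

lemma isState_replace {s s' r : List IS.G} (hs : s ≠ []) (hs' : IS.IsState s')
    (hg : IS.gOf s = IS.gOf s') (hw : IS.IsState (s ++ r)) : IS.IsState (s' ++ r) := by
  obtain ⟨⟨_, hch⟩, _⟩ := hw
  obtain ⟨⟨hne', hch'⟩, hhd'⟩ := hs'
  rw [List.Chain', List.isChain_append] at hch
  refine ⟨⟨by simp [hne'], List.isChain_append.2 ⟨hch', hch.2.1, ?_⟩⟩, ?_⟩
  · intro x hx y hy
    obtain rfl : x = IS.gOf s' := by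
      rw [Option.mem_def, getLast?_state hne'] at hx
      exact (Option.some.inj hx).symm
    exact hg ▸ hch.2.2 (IS.gOf s) (by rw [Option.mem_def, getLast?_state hs]) y hy
  · rw [List.head?_append]
    cases hh : s'.head? with
    | none => simp [hh] at hhd'
    | some a => rw [hh] at hhd'; simpa using hhd'

lemma gOf_replace {s s' : List IS.G} (hg : IS.gOf s = IS.gOf s') (r : List IS.G) :
    IS.gOf (s' ++ r) = IS.gOf (s ++ r) := by
  cases r with
  | nil => simpa using hg.symm
  | cons a t => rw [gOf_append (by simp), gOf_append (by simp)]

lemma prefix_all {s : List IS.G} :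
    ∀ {K : List (List IS.G)}, K.Chain' IS.step →
      (∀ r₀ ∈ K.head?, s <+: r₀) → ∀ w ∈ K, s <+: w := by
  intro K
  induction K with
  | nil => simp
  | cons w K ih =>
    intro hch hh x hx
    rw [List.Chain', List.isChain_cons] at hch
    have hw : s <+: w := hh w rfl
    rcases List.mem_cons.1 hx with rfl | hx
    · exact hw
    · refine ih hch.2 ?_ x hx
      intro r₀ hr₀
      obtain ⟨g, rfl⟩ := hch.1 r₀ hr₀
      exact hw.trans (List.prefix_append _ _)

lemma map_replace {s s' : List IS.G} (hs : IS.IsState s) (hs' : IS.IsState s')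
    (hg : IS.gOf s = IS.gOf s') {K : List (List IS.G)}
    (hst : ∀ w ∈ K, IS.IsState w) (hch : K.Chain' IS.step) (hpre : ∀ w ∈ K, s <+: w) :
    (∀ w ∈ K.map (fun w => s' ++ w.drop s.length), IS.IsState w) ∧
    (K.map (fun w => s' ++ w.drop s.length)).Chain' IS.step ∧
    (K.map (fun w => s' ++ w.drop s.length)).map IS.gOf = K.map IS.gOf := by
  refine ⟨?_, ?_, ?_⟩
  · intro w hw
    obtain ⟨u, hu, rfl⟩ := List.mem_map.1 hw
    obtain ⟨r, rfl⟩ := hpre u hu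
    rw [List.drop_left]
    exact isState_replace hs.1.1 hs' hg (hst _ hu)
  · rw [List.Chain', List.isChain_map, List.isChain_iff_getElem]
    rw [List.Chain', List.isChain_iff_getElem] at hch
    intro k hk
    obtain ⟨g, hgk⟩ := hch k hk
    obtain ⟨r, hr⟩ := hpre K[k] (List.getElem_mem _)
    rw [← hr] at hgk ⊢
    rw [hgk, List.append_assoc, List.drop_left, List.drop_left]
    exact ⟨g, by rw [List.append_assoc]⟩
  · rw [List.map_map]
    refine List.map_congr_left ?_
    intro u hu
    obtain ⟨r, rfl⟩ := hpre u hu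
    simp only [Function.comp_apply, List.drop_left]
    exact gOf_replace hg r

namespace Interval

lemma seq_ne (I : Interval IS) : I.seq ≠ [] := I.isInterval.1

lemma states (I : Interval IS) : ∀ w ∈ I.seq, IS.IsState w := I.isInterval.2.1

lemma chain (I : Interval IS) : I.seq.Chain' IS.step := I.isInterval.2.2

lemma head?_seq (I : Interval IS) : I.seq.head? = some I.first := by
  cases h : I.seq with
  | nil => exact absurd h I.seq_ne
  | cons a t => simp [Interval.first, h]

lemma getLast?_seq (I : Interval IS) : I.seq.getLast? = some I.last := by
  rw [List.getLast?_eq_getLast I.seq_ne]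
  simp [Interval.last, List.getLastD_eq_getLast?, List.getLast?_eq_getLast I.seq_ne]

lemma first_state (I : Interval IS) : IS.IsState I.first :=
  I.states _ (List.mem_of_mem_head? (by rw [I.head?_seq]; rfl))

lemma last_state (I : Interval IS) : IS.IsState I.last := by
  refine I.states _ ?_
  have := I.getLast?_seq
  rw [List.getLast?_eq_getLast I.seq_ne] at this
  exact (Option.some.inj this) ▸ List.getLast_mem I.seq_ne

lemma gword_head? (I : Interval IS) : I.gword.head? = some (IS.gOf I.first) := by
  rw [Interval.gword, List.head?_map, I.head?_seq]; rfl

lemma gword_getLast? (I : Interval IS) : I.gword.getLast? = some (IS.gOf I.last) := by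
  rw [Interval.gword, List.getLast?_map, I.getLast?_seq]; rfl

lemma first_eq {l : List (List IS.G)} {hl : IS.IsInterval l} {w : List IS.G}
    (h : l.head? = some w) : (Interval.mk l hl).first = w := by
  cases l with
  | nil => cases h
  | cons a t => exact Option.some.inj h

end Interval

lemma gword_len_eq {I I' : Interval IS} (h : I.gword = I'.gword) :
    I.seq.length = I'.seq.length := by
  simpa [Interval.gword] using congrArg List.length h

lemma gOf_last_eq {I I' : Interval IS} (h : I.gword = I'.gword) :
    IS.gOf I.last = IS.gOf I'.last := by
  have h1 := I.gword_getLast?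
  rw [h, I'.gword_getLast?] at h1
  exact (Option.some.inj h1).symm

lemma simI_congr {i : Fin (m + 1)} {I I' J : Interval IS} (h : I.gword = I'.gword)
    (hs : IS.simI i I J) : IS.simI i I' J := by
  rw [ISRL.simI, List.forall₂_iff_get] at hs ⊢
  have hlen := gword_len_eq h
  refine ⟨hlen ▸ hs.1, ?_⟩
  intro k h1 h2
  have hk : IS.gOf (I.seq.get ⟨k, hlen ▸ h1⟩) = IS.gOf (I'.seq.get ⟨k, h1⟩) := by
    have hq : I.gword[k]? = I'.gword[k]? := by rw [h]
    simp only [Interval.gword, List.getElem?_map, List.getElem?_eq_getElem, hlen ▸ h1, h1,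
      Option.map_some, Option.some.injEq] at hq
    simpa using hq
  have := hs.2 k (hlen ▸ h1) h2
  rw [ISRL.simS] at this ⊢
  rw [← hk]
  exact this

lemma simC_congr {Γ : Finset (Fin (m + 1))} {I I' J : Interval IS} (h : I.gword = I'.gword)
    (hs : IS.simC Γ I J) : IS.simC Γ I' J := by
  induction hs with
  | single hr =>
    obtain ⟨i, hi, hsim⟩ := hr
    exact Relation.TransGen.single ⟨i, hi, simI_congr h hsim⟩
  | tail _ hr ih => exact ih.tail hr

lemma relA_transfer {I I' J : Interval IS} (h : I.gword = I'.gword) (hJ : relA I J) :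
    ∃ J', relA I' J' ∧ J.gword = J'.gword := by
  have hls := gOf_last_eq h
  have hpre : ∀ w ∈ J.seq, I.last <+: w := by
    refine prefix_all J.chain ?_
    intro r hr
    rw [Option.mem_def, J.head?_seq] at hr
    obtain rfl := Option.some.inj hr
    rw [hJ]
  obtain ⟨hst', hch', hgw⟩ :=
    map_replace I.last_state I'.last_state hls J.states J.chain hpre
  refine ⟨⟨J.seq.map (fun w => I'.last ++ w.drop I.last.length),
    by simp [J.seq_ne], hst', hch'⟩, ?_, ?_⟩
  · show Interval.first _ = I'.last
    refine Interval.first_eq ?_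
    rw [List.head?_map, J.head?_seq, hJ]
    simp [List.drop_length]
  · show List.map IS.gOf J.seq = List.map IS.gOf _
    exact hgw.symm

lemma relN_transfer {I I' J : Interval IS} (h : I.gword = I'.gword) (hJ : relN I J) :
    ∃ J', relN I' J' ∧ J.gword = J'.gword := by
  have hls := gOf_last_eq h
  obtain ⟨g, hg⟩ := hJ
  have hpre : ∀ w ∈ J.seq, I.last <+: w := by
    refine prefix_all J.chain ?_
    intro r hr
    rw [Option.mem_def, J.head?_seq] at hr
    obtain rfl := Option.some.inj hr
    rw [hg]
    exact ⟨[g], rfl⟩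
  obtain ⟨hst', hch', hgw⟩ :=
    map_replace I.last_state I'.last_state hls J.states J.chain hpre
  refine ⟨⟨J.seq.map (fun w => I'.last ++ w.drop I.last.length),
    by simp [J.seq_ne], hst', hch'⟩, ⟨g, ?_⟩, ?_⟩
  · show Interval.first _ = I'.last ++ [g]
    refine Interval.first_eq ?_
    rw [List.head?_map, J.head?_seq, hg]
    simp [List.drop_left]
  · show List.map IS.gOf J.seq = List.map IS.gOf _
    exact hgw.symm

lemma relBbar_transfer {I I' J : Interval IS} (h : I.gword = I'.gword) (hJ : relB J I) :
    ∃ J', relB J' I' ∧ J.gword = J'.gword := by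
  have hls := gOf_last_eq h
  obtain ⟨K, hKne, hseq⟩ := hJ
  have hch := J.chain
  rw [hseq, List.Chain', List.isChain_append] at hch
  have hjun : ∀ y ∈ K.head?, IS.step I.last y := by
    intro y hy
    exact hch.2.2 I.last (by rw [Option.mem_def, I.getLast?_seq]) y hy
  have hpre : ∀ w ∈ K, I.last <+: w := by
    refine prefix_all hch.2.1 ?_
    intro r hr
    obtain ⟨g, rfl⟩ := hjun r hr
    exact ⟨[g], rfl⟩
  have hstK : ∀ w ∈ K, IS.IsState w := fun w hw =>
    J.states w (by rw [hseq]; exact List.mem_append_right _ hw)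
  obtain ⟨hst', hch', hgw⟩ :=
    map_replace I.last_state I'.last_state hls hstK hch.2.1 hpre
  set f : List IS.G → List IS.G := fun w => I'.last ++ w.drop I.last.length with hf
  refine ⟨⟨I'.seq ++ K.map f, ?_, ?_, ?_⟩, ⟨K.map f, by simpa using hKne, rfl⟩, ?_⟩
  · simp [I'.seq_ne]
  · intro w hw
    rcases List.mem_append.1 hw with hw | hw
    · exact I'.states w hw
    · exact hst' w hw
  · rw [List.Chain', List.isChain_append]
    refine ⟨I'.chain, hch', ?_⟩
    intro x hx y hy
    obtain rfl : x = I'.last := by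
      rw [Option.mem_def, I'.getLast?_seq] at hx
      exact (Option.some.inj hx).symm
    cases K with
    | nil => exact absurd rfl hKne
    | cons k ks =>
      obtain rfl : y = f k := by
        rw [List.map_cons] at hy
        rw [Option.mem_def] at hy
        exact (Option.some.inj hy).symm
      obtain ⟨g, hgk⟩ := hjun k rfl
      refine ⟨g, ?_⟩
      rw [hf]
      simp only [hgk, List.drop_left]
  · show List.map IS.gOf J.seq = List.map IS.gOf (I'.seq ++ List.map f K)
    rw [hseq, List.map_append, List.map_append, hgw,
      show List.map IS.gOf I.seq = List.map IS.gOf I'.seq from h]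

lemma dia_transfer {X : HSMod} {I I' J : Interval IS} (h : I.gword = I'.gword)
    (hX : X = HSMod.A ∨ X = HSMod.Bbar ∨ X = HSMod.N) (hJ : IS.hsRel X I J) :
    ∃ J', IS.hsRel X I' J' ∧ J.gword = J'.gword := by
  rcases hX with rfl | rfl | rfl
  · exact relA_transfer h hJ
  · exact relBbar_transfer h hJ
  · exact relN_transfer h hJ

end ISRL

lemma fsize_pos {m : ℕ} {V : Type} (φ : EHSFormula m V) : 1 ≤ fsize φ := by
  cases φ <;> simp [fsize]

lemma TL_modal {m : ℕ} {V : Type} [DecidableEq V] {φ χ : EHSFormula m V} (hχ : χ ∈ TL φ) :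
    (∃ i ψ, χ = .know i ψ) ∨ (∃ Γ ψ, χ = .common Γ ψ) ∨ (∃ X ψ, χ = .dia X ψ) := by
  induction φ with
  | pt => simp [TL] at hχ
  | prop p => simp [TL] at hχ
  | neg φ ih => exact ih hχ
  | conj φ ψ ih1 ih2 =>
    rw [TL, Finset.mem_union] at hχ
    rcases hχ with hχ | hχ
    · exact ih1 hχ
    · exact ih2 hχ
  | know i φ _ => exact Or.inl ⟨i, φ, by simpa [TL] using hχ⟩
  | common Γ φ _ => exact Or.inr (Or.inl ⟨Γ, φ, by simpa [TL] using hχ⟩)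
  | dia X φ _ => exact Or.inr (Or.inr ⟨X, φ, by simpa [TL] using hχ⟩)

lemma TL_ABN {m : ℕ} {V : Type} [DecidableEq V] {φ χ : EHSFormula m V} (hφ : IsABN φ)
    (hχ : χ ∈ TL φ) : IsABN χ := by
  induction φ with
  | pt => simp [TL] at hχ
  | prop p => simp [TL] at hχ
  | neg φ ih => exact ih hφ hχ
  | conj φ ψ ih1 ih2 =>
    rw [TL, Finset.mem_union] at hχ
    rcases hχ with hχ | hχ
    · exact ih1 hφ.1 hχ
    · exact ih2 hφ.2 hχ
  | know i φ _ => rw [TL, Finset.mem_singleton] at hχ; exact hχ ▸ hφ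
  | common Γ φ _ => rw [TL, Finset.mem_singleton] at hχ; exact hχ ▸ hφ
  | dia X φ _ => rw [TL, Finset.mem_singleton] at hχ; exact hχ ▸ hφ

open ISRL in
lemma mct_main {m : ℕ} {Var : Type} [DecidableEq Var] (IS : ISRL m Var)
    (Q : Var → Type) (dfa : ∀ p, DFA IS.G (Q p)) :
    ∀ n (φ : EHSFormula m Var), fsize φ ≤ n → IsABN φ →
      ∀ I I' : ISRL.Interval IS, I.gword = I'.gword → MCTEq IS Q dfa φ I I' := by
  intro n
  induction n with
  | zero => intro φ hle; have := fsize_pos φ; omega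
  | succ n ih =>
    intro φ hle hφ I I' h
    rw [ISRL.MCTEq]
    refine ⟨?_, gOf_last_eq h, ?_, fun p => by rw [h], fun χ hχ => ?_⟩
    · have h1 := I.gword_head?
      rw [h, I'.gword_head?] at h1
      exact (Option.some.inj h1).symm
    · unfold ISRL.Interval.isPt
      rw [gword_len_eq h]
    · have hlt : fsize (body χ) ≤ n := by
        have := fsize_body_lt φ χ hχ
        omega
      have hABNχ : IsABN χ := TL_ABN hφ hχ
      rcases TL_modal hχ with ⟨i, ψ, rfl⟩ | ⟨Γ, ψ, rfl⟩ | ⟨X, ψ, rfl⟩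
      · exact ⟨fun J hJ => ⟨J, simI_congr h hJ, ih ψ hlt hABNχ J J rfl⟩,
          fun J' hJ' => ⟨J', simI_congr h.symm hJ', ih ψ hlt hABNχ J' J' rfl⟩⟩
      · exact ⟨fun J hJ => ⟨J, simC_congr h hJ, ih ψ hlt hABNχ J J rfl⟩,
          fun J' hJ' => ⟨J', simC_congr h.symm hJ', ih ψ hlt hABNχ J' J' rfl⟩⟩
      · constructor
        · intro J hJ
          obtain ⟨J', hrel, hgw⟩ := dia_transfer h hABNχ.1 hJ
          exact ⟨J', hrel, ih ψ hlt hABNχ.2 J J' hgw⟩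
        · intro J' hJ'
          obtain ⟨J, hrel, hgw⟩ := dia_transfer h.symm hABNχ.1 hJ'
          exact ⟨J, hrel, ih ψ hlt hABNχ.2 J J' hgw.symm⟩

end Lemma2Aux

open ISRL in
/-- Lemma 2: modal context trees are history-independent.  If `I` and `I'` are
intervals of the model `M` with `g(I) = g(I')`, then `MCT_I^φ = MCT_{I'}^φ`. -/
theorem stmt7 {m : ℕ} {Var : Type} [Fintype Var] [DecidableEq Var] (IS : ISRL m Var)
    (Q : Var → Type) [∀ p, Fintype (Q p)] (dfa : ∀ p, DFA IS.G (Q p))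
    (hdfa : ∀ p, (dfa p).accepts = (IS.lab p).matches')
    (φ : EHSFormula m Var) (hφ : IsABN φ)
    (I I' : ISRL.Interval IS) (h : I.gword = I'.gword) :
    MCTEq IS Q dfa φ I I' :=
  mct_main IS Q dfa (fsize φ) φ le_rfl hφ I I' h
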